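/- Let G = (V,E) be a graph with maximum degree Δ, and let 𝒫 be a partition of V such that for each part U ∈ 𝒫, the induced subgraph G[U] is connected and |U| ≤ s. Let G_𝒫 be the multigraph obtained from G by contracting each part U ∈ 𝒫 into a single node. If h(G) ≤ 1/(2s), then h(G_𝒫) ≤ 4 s² Δ · h(G). -/

import Mathlib

variable {V P : Type*}

noncomputable def gdeg (G : SimpleGraph V) (v : V) : ℕ := (G.neighborSet v).ncard

noncomputable def gcut (G : SimpleGraph V) (S : Set V) : ℕ :=
  {e ∈ G.edgeSet | ∃ u ∈ S, ∃ v ∈ Sᶜ, e = s(u, v)}.ncard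

/-- the expansion `h(G)` of a simple graph: the minimum of `δ(S)/min(|S|,|V−S|)`
over nonempty proper cuts -/
noncomputable def expansion (G : SimpleGraph V) : ℝ :=
  sInf {x | ∃ S : Set V, S.Nonempty ∧ S ≠ Set.univ ∧
    x = (gcut G S : ℝ) / ((min S.ncard Sᶜ.ncard : ℕ) : ℝ)}

/-- the expansion `h(G_𝒫)` of the multigraph obtained from `G` by contracting each
fiber of `c : V → P` into a single node (parallel edges kept): a cut `S ⊆ P` of the
contracted graph has `δ_{G_𝒫}(S) = δ_G(c⁻¹ S)` crossing edges. -/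
noncomputable def contractedExpansion (G : SimpleGraph V) (c : V → P) : ℝ :=
  sInf {x | ∃ S : Set P, S.Nonempty ∧ S ≠ Set.univ ∧
    x = (gcut G (c ⁻¹' S) : ℝ) / ((min S.ncard Sᶜ.ncard : ℕ) : ℝ)}

lemma ncard_biUnion_le' {α β : Type*} (t : Finset β) (f : β → Set α)
    (hf : ∀ b ∈ t, (f b).Finite) :
    (⋃ b ∈ t, f b).ncard ≤ ∑ b ∈ t, (f b).ncard := by
  classical
  induction t using Finset.induction with
  | empty => simp
  | @insert a t' h ih =>
    rw [Finset.sum_insert h]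
    have h1 : (⋃ b ∈ insert a t', f b) = f a ∪ ⋃ b ∈ t', f b := by
      simp [Set.biUnion_insert]
    rw [h1]
    exact le_trans (Set.ncard_union_le _ _)
      (Nat.add_le_add le_rfl (ih (fun b hb => hf b (Finset.mem_insert_of_mem hb))))

lemma gcut_compl (G : SimpleGraph V) (S : Set V) : gcut G Sᶜ = gcut G S := by
  unfold gcut
  congr 1
  ext e
  simp only [Set.mem_setOf_eq, compl_compl]
  constructor
  · rintro ⟨he, u, hu, v, hv, rfl⟩
    exact ⟨he, v, hv, u, hu, Sym2.eq_swap⟩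
  · rintro ⟨he, u, hu, v, hv, rfl⟩
    exact ⟨he, v, hv, u, hu, Sym2.eq_swap⟩

lemma ncard_incidenceSet (G : SimpleGraph V) (v : V) :
    (G.incidenceSet v).ncard = gdeg G v := by
  classical
  rw [gdeg, ← Nat.card_coe_set_eq, ← Nat.card_coe_set_eq]
  exact Nat.card_congr (G.incidenceSetEquivNeighborSet v)

lemma exists_crossing (G : SimpleGraph V) (A : Set V) (hA : (G.induce A).Connected)
    (S : Set V) (u v : V) (hu : u ∈ A) (hv : v ∈ A) (huS : u ∈ S) (hvS : v ∉ S) :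
    ∃ x y, G.Adj x y ∧ x ∈ A ∧ y ∈ A ∧ x ∈ S ∧ y ∉ S := by
  obtain ⟨w⟩ := hA.preconnected ⟨u, hu⟩ ⟨v, hv⟩
  obtain ⟨d, _, hd1, hd2⟩ := w.exists_boundary_dart ((↑) ⁻¹' S : Set A)
    (by simpa using huS) (by simpa using hvS)
  exact ⟨d.fst, d.snd, d.adj, d.fst.2, d.snd.2, hd1, hd2⟩


/-- If each part of the partition (the fibers of `c`) induces a connected subgraph of
`G` and has at most `s` vertices, `G` has maximum degree `Δ`, and `h(G) ≤ 1/(2s)`,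
then the contracted multigraph `G_𝒫` satisfies `h(G_𝒫) ≤ 4 s² Δ · h(G)`. -/
theorem contracted_expansion_bound [Fintype V] [Fintype P]
    (G : SimpleGraph V) (c : V → P) (hc : Function.Surjective c)
    (s Δ : ℕ) (hΔ : ∀ v : V, gdeg G v ≤ Δ)
    (hconn : ∀ p : P, (G.induce (c ⁻¹' {p})).Connected)
    (hsize : ∀ p : P, (c ⁻¹' {p}).ncard ≤ s)
    (hsmall : expansion G ≤ 1 / (2 * (s : ℝ))) :
    contractedExpansion G c ≤ 4 * (s : ℝ) ^ 2 * (Δ : ℝ) * expansion G := by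
  classical
  have hexp0 : 0 ≤ expansion G := Real.sInf_nonneg (by rintro x ⟨S, -, -, rfl⟩; positivity)
  set CS := {x | ∃ S : Set P, S.Nonempty ∧ S ≠ Set.univ ∧
    x = (gcut G (c ⁻¹' S) : ℝ) / ((min S.ncard Sᶜ.ncard : ℕ) : ℝ)} with hCS
  have hCeq : contractedExpansion G c = sInf CS := rfl
  by_cases hCne : CS.Nonempty
  case neg =>
    rw [hCeq, Set.not_nonempty_iff_eq_empty.mp hCne, Real.sInf_empty]
    exact mul_nonneg (by positivity) hexp0
  -- Every element of CS is nonneg, so CS is bddBelow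
  have hCbdd : BddBelow CS := ⟨0, by rintro x ⟨S, -, -, rfl⟩; positivity⟩
  -- extract two distinct vertices from a proper nonempty cut of P
  obtain ⟨x₀, T₀, hT₀ne, hT₀u, -⟩ := hCne
  obtain ⟨p₀, hp₀⟩ := hT₀ne
  obtain ⟨q₀, hq₀⟩ := Set.nonempty_compl.mpr hT₀u
  obtain ⟨u₀, hu₀⟩ := hc p₀
  obtain ⟨v₀, hv₀⟩ := hc q₀
  have huv : u₀ ≠ v₀ := by
    rintro rfl; rw [hu₀] at hv₀; exact hq₀ (hv₀ ▸ hp₀)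
  have hs1 : 1 ≤ s := by
    refine le_trans ?_ (hsize p₀)
    rw [Nat.one_le_iff_ne_zero]
    intro h0
    have := Set.ncard_eq_zero (Set.toFinite _) |>.mp h0
    rw [Set.eq_empty_iff_forall_notMem] at this
    exact this u₀ hu₀
  have hsR : (0:ℝ) < s := by exact_mod_cast hs1
  -- the expansion set is finite and nonempty; take a minimizer
  set ES := {x | ∃ S : Set V, S.Nonempty ∧ S ≠ Set.univ ∧
    x = (gcut G S : ℝ) / ((min S.ncard Sᶜ.ncard : ℕ) : ℝ)} with hES
  have hEeq : expansion G = sInf ES := rfl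
  have hEfin : ES.Finite := by
    apply Set.Finite.subset (Set.finite_range
      (fun S : Set V => (gcut G S : ℝ) / ((min S.ncard Sᶜ.ncard : ℕ) : ℝ)))
    rintro x ⟨S, -, -, rfl⟩
    exact ⟨S, rfl⟩
  have hEne : ES.Nonempty := by
    refine ⟨_, {u₀}, Set.singleton_nonempty _, ?_, rfl⟩
    intro h
    exact huv (Set.mem_singleton_iff.mp (h ▸ Set.mem_univ v₀)).symm
  have hmem : expansion G ∈ ES := hEeq ▸ hEne.csInf_mem hEfin
  -- WLOG the minimizing cut S satisfies |S| ≤ |Sᶜ|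
  obtain ⟨S, hSne, hScne, hSle, hSeq⟩ :
      ∃ S : Set V, S.Nonempty ∧ Sᶜ.Nonempty ∧ S.ncard ≤ Sᶜ.ncard ∧
        expansion G = (gcut G S : ℝ) / (S.ncard : ℝ) := by
    obtain ⟨S₀, hne, hu, hx⟩ := hmem
    have hcne : S₀ᶜ.Nonempty := Set.nonempty_compl.mpr hu
    rcases le_total S₀.ncard S₀ᶜ.ncard with hle | hle
    · exact ⟨S₀, hne, hcne, hle, by rw [hx, min_eq_left hle]⟩
    · refine ⟨S₀ᶜ, hcne, by rwa [compl_compl], by rwa [compl_compl], ?_⟩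
      rw [hx, min_eq_right hle, gcut_compl]
  set n := S.ncard with hn
  have hnpos : 0 < n := (Set.ncard_pos (Set.toFinite _)).mpr hSne
  have hnR : (0:ℝ) < n := by exact_mod_cast hnpos
  set δ := gcut G S with hδdef
  have hδ2 : (δ:ℝ) ≤ (n:ℝ) / (2*s) := by
    have h1 : (δ:ℝ) = expansion G * n := by rw [hSeq]; field_simp
    rw [h1]
    calc expansion G * n ≤ (1/(2*s)) * n := mul_le_mul_of_nonneg_right hsmall hnR.le
    _ = (n:ℝ)/(2*s) := by ring
  -- generic covering bound via fibers
  have hcover : ∀ (X : Set V) (TT : Set P), (∀ v ∈ X, c v ∈ TT) → X.ncard ≤ s * TT.ncard := by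
    intro X TT hX
    have hsub : X ⊆ ⋃ p ∈ TT.toFinite.toFinset, c ⁻¹' {p} := by
      intro v hv
      simp only [Set.mem_iUnion]
      exact ⟨c v, by simpa using hX v hv, rfl⟩
    calc X.ncard ≤ (⋃ p ∈ TT.toFinite.toFinset, c ⁻¹' {p}).ncard :=
          Set.ncard_le_ncard hsub (Set.toFinite _)
    _ ≤ ∑ p ∈ TT.toFinite.toFinset, (c ⁻¹' {p}).ncard :=
          ncard_biUnion_le' _ _ (fun _ _ => Set.toFinite _)
    _ ≤ ∑ _p ∈ TT.toFinite.toFinset, s := Finset.sum_le_sum (fun p _ => hsize p)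
    _ = TT.toFinite.toFinset.card * s := by rw [Finset.sum_const, smul_eq_mul]
    _ = s * TT.ncard := by rw [Set.ncard_eq_toFinset_card _ TT.toFinite, Nat.mul_comm]
  -- split parts
  set B := {p : P | (c ⁻¹' {p} ∩ S).Nonempty ∧ (c ⁻¹' {p} ∩ Sᶜ).Nonempty} with hBdef
  have hBcard : B.ncard ≤ δ := by
    set Q : P → Prop := fun p =>
      ∃ xy : V × V, (G.Adj xy.1 xy.2 ∧ c xy.1 = p ∧ c xy.2 = p) ∧ xy.1 ∈ S ∧ xy.2 ∉ S with hQdef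
    set g : P → V × V := fun p => if hp : Q p then hp.choose else (u₀, u₀) with hgdef
    have hg : ∀ p ∈ B, (G.Adj (g p).1 (g p).2 ∧ c (g p).1 = p ∧ c (g p).2 = p) ∧
        (g p).1 ∈ S ∧ (g p).2 ∉ S := by
      intro p hp
      obtain ⟨⟨u, hu1, hu2⟩, ⟨v, hv1, hv2⟩⟩ := hp
      obtain ⟨x, y, hxy, hx, hy, hxS, hyS⟩ :=
        exists_crossing G (c ⁻¹' {p}) (hconn p) S u v hu1 hv1 hu2 hv2
      have hq : Q p := ⟨(x, y), ⟨hxy, by simpa using hx, by simpa using hy⟩, hxS, hyS⟩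
      simp only [hgdef, dif_pos hq]
      exact hq.choose_spec
    apply Set.ncard_le_ncard_of_injOn (fun p => s((g p).1, (g p).2))
    · intro p hp
      obtain ⟨⟨hadj, hc1, hc2⟩, hS1, hS2⟩ := hg p hp
      exact ⟨hadj, (g p).1, hS1, (g p).2, hS2, rfl⟩
    · intro p hp q hq hpq
      obtain ⟨⟨_, hcp1, hcp2⟩, _, _⟩ := hg p hp
      obtain ⟨⟨_, hcq1, hcq2⟩, _, _⟩ := hg q hq
      simp only [Sym2.eq_iff] at hpq
      rcases hpq with ⟨h1, _⟩ | ⟨h1, _⟩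
      · rw [← hcp1, h1, hcq1]
      · rw [← hcp1, h1, hcq2]
  set T := {p : P | c ⁻¹' {p} ⊆ S} with hTdef
  set T' := {p : P | c ⁻¹' {p} ⊆ Sᶜ} with hT'def
  have hST : S.ncard ≤ s * (T ∪ B).ncard := by
    refine hcover S (T ∪ B) (fun v hv => ?_)
    by_cases hf : c ⁻¹' {c v} ⊆ S
    · exact Or.inl hf
    · obtain ⟨w, hw1, hw2⟩ := Set.not_subset.mp hf
      exact Or.inr ⟨⟨v, rfl, hv⟩, ⟨w, hw1, hw2⟩⟩
  have hST' : Sᶜ.ncard ≤ s * (T' ∪ B).ncard := by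
    refine hcover Sᶜ (T' ∪ B) (fun v hv => ?_)
    by_cases hf : c ⁻¹' {c v} ⊆ Sᶜ
    · exact Or.inl hf
    · obtain ⟨w, hw1, hw2⟩ := Set.not_subset.mp hf
      exact Or.inr ⟨⟨w, hw1, not_not.mp hw2⟩, ⟨v, rfl, hv⟩⟩
  have hsB : (s:ℝ) * B.ncard ≤ (n:ℝ)/2 := by
    have h2 : (B.ncard:ℝ) ≤ (δ:ℝ) := by exact_mod_cast hBcard
    calc (s:ℝ) * B.ncard ≤ s * δ := mul_le_mul_of_nonneg_left h2 hsR.le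
    _ ≤ s * ((n:ℝ)/(2*s)) := mul_le_mul_of_nonneg_left hδ2 hsR.le
    _ = (n:ℝ)/2 := by field_simp
  have hTcard : (n:ℝ)/2 ≤ (s:ℝ) * T.ncard := by
    have h1 : (n:ℝ) ≤ (s:ℝ) * ((T ∪ B).ncard : ℝ) := by exact_mod_cast hST
    have h2 : ((T ∪ B).ncard : ℝ) ≤ (T.ncard : ℝ) + (B.ncard : ℝ) := by
      exact_mod_cast Set.ncard_union_le T B
    have h3 : (s:ℝ) * ((T ∪ B).ncard : ℝ) ≤ s * ((T.ncard : ℝ) + (B.ncard : ℝ)) :=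
      mul_le_mul_of_nonneg_left h2 hsR.le
    nlinarith
  have hT'card : (n:ℝ)/2 ≤ (s:ℝ) * T'.ncard := by
    have h0 : (n:ℝ) ≤ (Sᶜ.ncard : ℝ) := by exact_mod_cast hSle
    have h1 : (Sᶜ.ncard:ℝ) ≤ (s:ℝ) * ((T' ∪ B).ncard : ℝ) := by exact_mod_cast hST'
    have h2 : ((T' ∪ B).ncard : ℝ) ≤ (T'.ncard : ℝ) + (B.ncard : ℝ) := by
      exact_mod_cast Set.ncard_union_le T' B
    have h3 : (s:ℝ) * ((T' ∪ B).ncard : ℝ) ≤ s * ((T'.ncard : ℝ) + (B.ncard : ℝ)) :=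
      mul_le_mul_of_nonneg_left h2 hsR.le
    nlinarith
  have hTne : T.Nonempty := by
    rw [← Set.ncard_pos (Set.toFinite _)]
    by_contra hcon
    have h0 : T.ncard = 0 := by omega
    rw [h0] at hTcard
    push_cast at hTcard
    nlinarith
  have hTu : T ≠ Set.univ := by
    obtain ⟨w₁, hw₁⟩ := hScne
    intro h
    have hmem : c ⁻¹' {c w₁} ⊆ S := by
      have : c w₁ ∈ T := h ▸ Set.mem_univ _
      exact this
    exact hw₁ (hmem rfl)
  have hTc : T'.ncard ≤ Tᶜ.ncard := by
    refine Set.ncard_le_ncard (fun p hp => ?_) (Set.toFinite _)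
    intro hpT
    obtain ⟨w, hw⟩ := hc p
    have hw1 : w ∈ c ⁻¹' {p} := by simp [hw]
    exact (hp hw1) (hpT hw1)
  have hminR : (n:ℝ)/(2*s) ≤ ((min T.ncard Tᶜ.ncard : ℕ) : ℝ) := by
    rw [Nat.cast_min]
    apply le_min
    · rw [div_le_iff₀ (by positivity)]
      calc (n:ℝ) ≤ 2*((s:ℝ)*T.ncard) := by linarith
      _ = (T.ncard:ℝ) * (2*s) := by ring
    · rw [div_le_iff₀ (by positivity)]
      have h4 : (T'.ncard : ℝ) ≤ (Tᶜ.ncard : ℝ) := by exact_mod_cast hTc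
      have h5 : (s:ℝ) * T'.ncard ≤ (s:ℝ) * Tᶜ.ncard := mul_le_mul_of_nonneg_left h4 hsR.le
      calc (n:ℝ) ≤ 2*((s:ℝ)*Tᶜ.ncard) := by linarith
      _ = (Tᶜ.ncard:ℝ) * (2*s) := by ring
  -- bounding the contracted cut
  have hWcard : (c ⁻¹' B).ncard ≤ s * B.ncard := hcover (c ⁻¹' B) B (fun v hv => hv)
  have hcut : gcut G (c ⁻¹' T) ≤ δ + Δ * (s * B.ncard) := by
    set Z := ⋃ w ∈ (c ⁻¹' B).toFinite.toFinset, G.incidenceSet w with hZ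
    have hsub : {e ∈ G.edgeSet | ∃ u ∈ c ⁻¹' T, ∃ v ∈ (c ⁻¹' T)ᶜ, e = s(u, v)} ⊆
        {e ∈ G.edgeSet | ∃ u ∈ S, ∃ v ∈ Sᶜ, e = s(u, v)} ∪ Z := by
      rintro e ⟨he, u, hu, v, hv, rfl⟩
      have huS : u ∈ S := by
        have h5 : c ⁻¹' {c u} ⊆ S := hu
        exact h5 rfl
      by_cases hvS : v ∈ S
      · right
        have hvB : c v ∈ B := by
          refine ⟨⟨v, rfl, hvS⟩, ?_⟩
          by_contra hcon
          apply hv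
          show c ⁻¹' {c v} ⊆ S
          intro w hw
          by_cases hwS : w ∈ S
          · exact hwS
          · exact absurd ⟨w, hw, hwS⟩ hcon
        simp only [hZ, Set.mem_iUnion]
        refine ⟨v, by simpa using hvB, he, ?_⟩
        exact Sym2.mem_mk_right u v
      · left
        exact ⟨he, u, huS, v, hvS, rfl⟩
    calc gcut G (c ⁻¹' T)
        ≤ ({e ∈ G.edgeSet | ∃ u ∈ S, ∃ v ∈ Sᶜ, e = s(u, v)} ∪ Z).ncard :=
          Set.ncard_le_ncard hsub (Set.toFinite _)
    _ ≤ δ + Z.ncard := Set.ncard_union_le _ _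
    _ ≤ δ + Δ * (s * B.ncard) := by
        have hZb : Z.ncard ≤ Δ * (c ⁻¹' B).ncard := by
          calc Z.ncard ≤ ∑ w ∈ (c ⁻¹' B).toFinite.toFinset, (G.incidenceSet w).ncard :=
                ncard_biUnion_le' _ _ (fun _ _ => Set.toFinite _)
          _ ≤ ∑ _w ∈ (c ⁻¹' B).toFinite.toFinset, Δ :=
                Finset.sum_le_sum (fun w _ => by rw [ncard_incidenceSet]; exact hΔ w)
          _ = (c ⁻¹' B).toFinite.toFinset.card * Δ := by rw [Finset.sum_const, smul_eq_mul]
          _ = Δ * (c ⁻¹' B).ncard := by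
                rw [Set.ncard_eq_toFinset_card _ (c ⁻¹' B).toFinite, Nat.mul_comm]
        have : Δ * (c ⁻¹' B).ncard ≤ Δ * (s * B.ncard) := Nat.mul_le_mul_left Δ hWcard
        omega
  -- conclude
  have hfinal : contractedExpansion G c ≤
      (gcut G (c ⁻¹' T) : ℝ) / ((min T.ncard Tᶜ.ncard : ℕ) : ℝ) := by
    rw [hCeq]
    exact csInf_le hCbdd ⟨T, hTne, hTu, rfl⟩
  by_cases hΔ0 : Δ = 0
  · subst hΔ0
    have hE0 : gcut G (c ⁻¹' T) = 0 := by
      rw [gcut, Set.ncard_eq_zero (Set.toFinite _)]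
      ext e
      simp only [Set.mem_setOf_eq, Set.mem_empty_iff_false, iff_false]
      rintro ⟨he, u, -, v, -, rfl⟩
      have : v ∈ G.neighborSet u := he
      have h6 : 0 < gdeg G u := by
        rw [gdeg, Set.ncard_pos (Set.toFinite _)]
        exact ⟨v, this⟩
      have := hΔ u
      omega
    rw [hE0] at hfinal
    simp only [Nat.cast_zero, zero_div] at hfinal ⊢
    calc contractedExpansion G c ≤ 0 := hfinal
    _ ≤ 4 * (s:ℝ)^2 * 0 * expansion G := by simp
  · have hΔR : (1:ℝ) ≤ Δ := by exact_mod_cast Nat.one_le_iff_ne_zero.mpr hΔ0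
    have hA : (gcut G (c ⁻¹' T) : ℝ) ≤ 2*s*Δ*δ := by
      have h1 : (gcut G (c ⁻¹' T):ℝ) ≤ (δ:ℝ) + Δ*(s*B.ncard) := by exact_mod_cast hcut
      have h2 : (B.ncard:ℝ) ≤ (δ:ℝ) := by exact_mod_cast hBcard
      have hδ0 : (0:ℝ) ≤ (δ:ℝ) := Nat.cast_nonneg _
      have hΔ0' : (0:ℝ) ≤ (Δ:ℝ) := Nat.cast_nonneg _
      have hs1R : (1:ℝ) ≤ s := by exact_mod_cast hs1
      have hΔs : (1:ℝ) ≤ (Δ:ℝ)*s := by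
        calc (1:ℝ) = 1*1 := by ring
        _ ≤ (Δ:ℝ)*s := mul_le_mul hΔR hs1R zero_le_one hΔ0'
      calc (gcut G (c ⁻¹' T):ℝ) ≤ (δ:ℝ) + Δ*(s*B.ncard) := h1
      _ ≤ (δ:ℝ) + Δ*(s*δ) := by
          have := mul_le_mul_of_nonneg_left (mul_le_mul_of_nonneg_left h2 hsR.le) hΔ0'
          linarith
      _ = (δ:ℝ)*(1 + Δ*s) := by ring
      _ ≤ (δ:ℝ)*(2*((Δ:ℝ)*s)) := mul_le_mul_of_nonneg_left (by linarith) hδ0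
      _ = 2*s*Δ*δ := by ring
    calc contractedExpansion G c
        ≤ (gcut G (c ⁻¹' T) : ℝ) / ((min T.ncard Tᶜ.ncard : ℕ) : ℝ) := hfinal
    _ ≤ (2*s*Δ*δ) / ((n:ℝ)/(2*s)) := by
        apply div_le_div₀ (by positivity) hA (by positivity) hminR
    _ = 4 * (s:ℝ)^2 * Δ * ((δ:ℝ)/(n:ℝ)) := by
        field_simp
        ring
    _ = 4 * (s:ℝ)^2 * Δ * expansion G := by rw [← hSeq]
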